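/- Let H be an n×n real symmetric positive definite matrix and let k > 0. Then there exists K* > 0 such that for every K > K* there exists a constant c > 0 with the following property: for all z, g ∈ ℝⁿ with z ≠ 0 and z ≠ g, −K·γ(z)·zᵀHz − k·γ(H⁻¹(z−g))·‖z−g‖² + 2k·γ(H⁻¹(z−g))·zᵀ(z−g) ≤ −c·(‖z‖² + ‖g‖²)^{(2−α₁)/2}. (This is the key Lyapunov decay estimate for V₁ = (‖z‖² + ‖g‖²)/2 in the target finite-time Newton-seeking system.) -/

import Mathlib

open scoped InnerProductSpace

/-- The scaling factor `γ(w) = c₁‖w‖^{-α₁} + c₂‖w‖^{-α₂}` (Euclidean norm, real powers). -/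
noncomputable def gammaFun {n : ℕ} (c₁ c₂ α₁ α₂ : ℝ) (w : EuclideanSpace ℝ (Fin n)) : ℝ :=
  c₁ * ‖w‖ ^ (-α₁) + c₂ * ‖w‖ ^ (-α₂)

/-- Matrix-vector multiplication viewed as a map on Euclidean space. -/
noncomputable def mulVecE {n : ℕ} (H : Matrix (Fin n) (Fin n) ℝ)
    (w : EuclideanSpace ℝ (Fin n)) : EuclideanSpace ℝ (Fin n) :=
  (EuclideanSpace.equiv (Fin n) ℝ).symm (H.mulVec (EuclideanSpace.equiv (Fin n) ℝ w))

lemma inner_mulVecE' {n : ℕ} (M : Matrix (Fin n) (Fin n) ℝ) (x : EuclideanSpace ℝ (Fin n)) :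
    ⟪x, mulVecE M x⟫_ℝ =
      dotProduct (star ((EuclideanSpace.equiv (Fin n) ℝ) x))
        (M.mulVec (EuclideanSpace.equiv (Fin n) ℝ x)) := by
  simp [mulVecE, PiLp.inner_apply, dotProduct, mul_comm]

lemma mulVecE_smul' {n : ℕ} (M : Matrix (Fin n) (Fin n) ℝ) (c : ℝ) (x : EuclideanSpace ℝ (Fin n)) :
    mulVecE M (c • x) = c • mulVecE M x :=
  (LinearMap.toContinuousLinearMap (Matrix.toEuclideanLin M)).map_smul c x

lemma mulVecE_norm_le' {n : ℕ} (M : Matrix (Fin n) (Fin n) ℝ) :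
    ∃ A > (0:ℝ), ∀ w : EuclideanSpace ℝ (Fin n), ‖mulVecE M w‖ ≤ A * ‖w‖ := by
  refine ⟨‖LinearMap.toContinuousLinearMap (Matrix.toEuclideanLin M)‖ + 1,
    by positivity, fun w => ?_⟩
  have h := (LinearMap.toContinuousLinearMap (Matrix.toEuclideanLin M)).le_opNorm w
  have : mulVecE M w = LinearMap.toContinuousLinearMap (Matrix.toEuclideanLin M) w := rfl
  rw [this]
  nlinarith [norm_nonneg w]

lemma lam_exists' {n : ℕ} (H : Matrix (Fin n) (Fin n) ℝ) (hH : H.PosDef) :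
    ∃ lam > (0:ℝ), ∀ x : EuclideanSpace ℝ (Fin n), lam * ‖x‖ ^ 2 ≤ ⟪x, mulVecE H x⟫_ℝ := by
  rcases Nat.eq_zero_or_pos n with hn | hn
  · subst hn
    refine ⟨1, one_pos, fun x => ?_⟩
    have hx : x = 0 := Subsingleton.elim x 0
    simp [hx, mulVecE]
  · set f : EuclideanSpace ℝ (Fin n) → ℝ := fun x => ⟪x, mulVecE H x⟫_ℝ with hf_def
    have hT : Continuous fun x : EuclideanSpace ℝ (Fin n) => mulVecE H x :=
      (LinearMap.toContinuousLinearMap (Matrix.toEuclideanLin H)).continuous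
    have hf : Continuous f := continuous_id.inner hT
    have hx₀ : EuclideanSpace.single (⟨0, hn⟩ : Fin n) (1:ℝ) ∈
        Metric.sphere (0:EuclideanSpace ℝ (Fin n)) 1 := by
      simp [EuclideanSpace.norm_single]
    obtain ⟨x₁, hx₁, hmin⟩ := (isCompact_sphere (0:EuclideanSpace ℝ (Fin n)) 1).exists_isMinOn
      ⟨_, hx₀⟩ hf.continuousOn
    have hx₁n : ‖x₁‖ = 1 := mem_sphere_zero_iff_norm.mp hx₁
    have hx₁0 : x₁ ≠ 0 := by intro h; rw [h] at hx₁n; simp at hx₁n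
    have hpos : 0 < f x₁ := by
      rw [hf_def]
      simp only
      rw [inner_mulVecE']
      exact hH.dotProduct_mulVec_pos (by simpa using hx₁0)
    refine ⟨f x₁, hpos, fun x => ?_⟩
    by_cases hx : x = 0
    · simp [hx, hf_def, mulVecE]
    · have hxn : (0:ℝ) < ‖x‖ := norm_pos_iff.mpr hx
      set y := ‖x‖⁻¹ • x with hy_def
      have hyn : ‖y‖ = 1 := by
        rw [hy_def, norm_smul]; simp [abs_of_pos (inv_pos.mpr hxn), inv_mul_cancel₀ hxn.ne']
      have hmem : y ∈ Metric.sphere (0:EuclideanSpace ℝ (Fin n)) 1 := by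
        simpa [mem_sphere_zero_iff_norm] using hyn
      have hscale : f x = ‖x‖ ^ 2 * f y := by
        have hxy : x = ‖x‖ • y := by rw [hy_def, smul_inv_smul₀ hxn.ne']
        rw [hf_def]; simp only
        conv_lhs => rw [hxy]
        rw [mulVecE_smul', real_inner_smul_left, real_inner_smul_right]
        ring
      have hy2 : f x₁ ≤ f y := hmin hmem
      calc f x₁ * ‖x‖ ^ 2 ≤ f y * ‖x‖ ^ 2 := by nlinarith [sq_nonneg ‖x‖]
        _ = f x := by rw [hscale]; ring

lemma rpow_mul_self' {x : ℝ} (hx : 0 < x) (a : ℝ) : x ^ a * x = x ^ (a + 1) := by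
  nth_rewrite 2 [← Real.rpow_one x]
  rw [← Real.rpow_add hx]

lemma sq_rpow' {x : ℝ} (hx : 0 < x) (a : ℝ) : (x ^ (2:ℕ)) ^ a = x ^ (2 * a) := by
  rw [← Real.rpow_natCast x 2, ← Real.rpow_mul hx.le]
  norm_num

lemma rpow_mul_sq' {x : ℝ} (hx : 0 < x) (a : ℝ) : x ^ a * x ^ (2:ℕ) = x ^ (a + 2) := by
  rw [← Real.rpow_natCast x 2, ← Real.rpow_add hx]
  norm_num


set_option maxHeartbeats 2000000 in
theorem stmt9 (n : ℕ) (c₁ c₂ q₁ q₂ α₁ α₂ : ℝ)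
    (hc₁ : 0 < c₁) (hc₂ : 0 < c₂)
    (hq₁ : 2 < q₁) (hq₂₁ : 1 < q₂) (hq₂₂ : q₂ < 2)
    (hα₁ : α₁ = (q₁ - 2) / (q₁ - 1)) (hα₂ : α₂ = (q₂ - 2) / (q₂ - 1))
    (H : Matrix (Fin n) (Fin n) ℝ) (hH : H.PosDef) (hHsymm : H.IsSymm)
    (k : ℝ) (hk : 0 < k) :
    ∃ Kstar > (0 : ℝ), ∀ K > Kstar,
      ∃ c > (0 : ℝ),
        ∀ z g : EuclideanSpace ℝ (Fin n), z ≠ 0 → z ≠ g →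
          -K * gammaFun c₁ c₂ α₁ α₂ z * ⟪z, mulVecE H z⟫_ℝ
              - k * gammaFun c₁ c₂ α₁ α₂ (mulVecE H⁻¹ (z - g)) * ‖z - g‖ ^ 2
              + 2 * k * gammaFun c₁ c₂ α₁ α₂ (mulVecE H⁻¹ (z - g)) * ⟪z, z - g⟫_ℝ ≤
            -c * (‖z‖ ^ 2 + ‖g‖ ^ 2) ^ ((2 - α₁) / 2) := by
  -- exponent facts
  have hα₁0 : 0 < α₁ := by rw [hα₁]; exact div_pos (by linarith) (by linarith)
  have hα₁1 : α₁ < 1 := by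
    rw [hα₁, div_lt_one (by linarith)]; linarith
  have hα₂0 : α₂ < 0 := by
    rw [hα₂]; exact div_neg_of_neg_of_pos (by linarith) (by linarith)
  -- coercivity and operator norm constants
  obtain ⟨lam, hlam, hlamP⟩ := lam_exists' H hH
  obtain ⟨A, hA0, hAb⟩ := mulVecE_norm_le' H
  obtain ⟨B, hB0, hBb⟩ := mulVecE_norm_le' H⁻¹
  have hdet : IsUnit H.det := isUnit_iff_ne_zero.mpr hH.det_pos.ne'
  -- constants
  set D₁ : ℝ := 9 * k * c₁ * A ^ α₁ with hD₁
  set D₂ : ℝ := 3 * k * c₂ * B ^ (-α₂) * 3 ^ (-α₂ + 1) with hD₂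
  set E : ℝ := (3/4) * k * c₁ * (3/2 * B) ^ (-α₁) with hE
  have hD₁0 : 0 < D₁ := by rw [hD₁]; positivity
  have hD₂0 : 0 < D₂ := by rw [hD₂]; positivity
  have hE0 : 0 < E := by rw [hE]; positivity
  refine ⟨(D₁ + lam * c₁) / (lam * c₁) + D₂ / (lam * c₂), by positivity, fun K hK => ?_⟩
  have hK0 : 0 < K := lt_trans (by positivity) hK
  have hK1 : D₁ + lam * c₁ ≤ K * (lam * c₁) := by
    rw [← div_le_iff₀ (by positivity)]
    have : D₂ / (lam * c₂) ≥ 0 := by positivity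
    linarith [hK.le]
  have hK2 : D₂ ≤ K * (lam * c₂) := by
    rw [← div_le_iff₀ (by positivity)]
    have : (D₁ + lam * c₁) / (lam * c₁) ≥ 0 := by positivity
    linarith [hK.le]
  refine ⟨min (lam * c₁ / (5:ℝ) ^ ((2 - α₁)/2)) (E / (2:ℝ) ^ ((2 - α₁)/2)), by positivity,
    fun z g hz hzg => ?_⟩
  set c := min (lam * c₁ / (5:ℝ) ^ ((2 - α₁)/2)) (E / (2:ℝ) ^ ((2 - α₁)/2)) with hc_def
  have hc0 : 0 < c := by rw [hc_def]; positivity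
  set u := mulVecE H⁻¹ (z - g) with hu_def
  set Γ := gammaFun c₁ c₂ α₁ α₂ u with hΓ_def
  set Γz := gammaFun c₁ c₂ α₁ α₂ z with hΓz_def
  set P := ⟪z, mulVecE H z⟫_ℝ with hP_def
  set N := ‖z‖ with hN_def
  set G := ‖g‖ with hG_def
  set S := ‖z - g‖ with hS_def
  set U := ‖u‖ with hU_def
  have hN : 0 < N := norm_pos_iff.mpr hz
  have hG : 0 ≤ G := norm_nonneg g
  have hS : 0 < S := by rw [hS_def]; exact norm_pos_iff.mpr (sub_ne_zero.mpr hzg)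
  have hHu : mulVecE H u = z - g := by
    rw [hu_def]
    simp only [mulVecE, ContinuousLinearEquiv.apply_symm_apply, Matrix.mulVec_mulVec, Matrix.mul_nonsing_inv H hdet, Matrix.one_mulVec, ContinuousLinearEquiv.symm_apply_apply]
  have hu0 : u ≠ 0 := by
    intro h
    rw [h] at hHu
    have : mulVecE H (0 : EuclideanSpace ℝ (Fin n)) = 0 :=
      (LinearMap.toContinuousLinearMap (Matrix.toEuclideanLin H)).map_zero
    rw [this] at hHu
    exact (sub_ne_zero.mpr hzg) hHu.symm
  have hU : 0 < U := norm_pos_iff.mpr hu0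
  have hSU : S ≤ A * U := by rw [hS_def, ← hHu]; exact hAb u
  have hUS : U ≤ B * S := hBb (z - g)
  have hP : lam * N ^ 2 ≤ P := hlamP z
  have hP0 : 0 < P := lt_of_lt_of_le (by positivity) hP
  have hΓz_eq : Γz = c₁ * N ^ (-α₁) + c₂ * N ^ (-α₂) := rfl
  have hΓ_eq : Γ = c₁ * U ^ (-α₁) + c₂ * U ^ (-α₂) := rfl
  have hΓ0 : 0 < Γ := by rw [hΓ_eq]; positivity
  have hΓz0 : 0 < Γz := by rw [hΓz_eq]; positivity
  -- algebraic reduction of the LHS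
  have hkey : 2 * ⟪z, z - g⟫_ℝ = N ^ 2 - G ^ 2 + S ^ 2 := by
    rw [inner_sub_right, real_inner_self_eq_norm_sq, hS_def, @norm_sub_sq_real]
    ring
  have heq : -K * Γz * P - k * Γ * S ^ 2 + 2 * k * Γ * ⟪z, z - g⟫_ℝ
      = -K * Γz * P + k * Γ * (N ^ 2 - G ^ 2) := by
    linear_combination k * Γ * hkey
  have hSNG : S ≤ N + G := norm_sub_le z g
  have hNGS : N - G ≤ S := norm_sub_norm_le z g
  have hcle1 : c ≤ lam * c₁ / (5:ℝ) ^ ((2 - α₁)/2) := min_le_left _ _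
  have hcle2 : c ≤ E / (2:ℝ) ^ ((2 - α₁)/2) := min_le_right _ _
  clear_value u Γ Γz P N G S U c D₁ D₂ E
  rw [heq]
  -- lower bound for K * Γz * P
  have idN1 : N ^ (-α₁) * N ^ (2:ℕ) = N ^ (2 - α₁) := by
    rw [rpow_mul_sq' hN]; ring_nf
  have idN2 : N ^ (-α₂) * N ^ (2:ℕ) = N ^ (2 - α₂) := by
    rw [rpow_mul_sq' hN]; ring_nf
  have hX : 0 < N ^ (2 - α₁) := Real.rpow_pos_of_pos hN _
  have hY : 0 < N ^ (2 - α₂) := Real.rpow_pos_of_pos hN _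
  have hΓzP : K * (lam * (c₁ * N ^ (2 - α₁) + c₂ * N ^ (2 - α₂))) ≤ K * Γz * P := by
    have h1 : Γz * (lam * N ^ 2) ≤ Γz * P := mul_le_mul_of_nonneg_left hP hΓz0.le
    have h2 : Γz * (lam * N ^ 2) = lam * (c₁ * N ^ (2 - α₁) + c₂ * N ^ (2 - α₂)) := by
      rw [hΓz_eq]
      linear_combination lam * c₁ * idN1 + lam * c₂ * idN2
    calc K * (lam * (c₁ * N ^ (2 - α₁) + c₂ * N ^ (2 - α₂))) = K * (Γz * (lam * N ^ 2)) := by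
          rw [h2]
      _ ≤ K * (Γz * P) := by exact mul_le_mul_of_nonneg_left h1 hK0.le
      _ = K * Γz * P := by ring
  rcases le_or_gt G (2 * N) with hcase | hcase
  · -- Case I : G ≤ 2N
    have hNG : N ^ 2 - G ^ 2 ≤ 3 * N * S := by
      have h2 : (N - G) * (N + G) ≤ S * (N + G) :=
        mul_le_mul_of_nonneg_right hNGS (by positivity)
      have h3 : S * (N + G) ≤ S * (3 * N) :=
        mul_le_mul_of_nonneg_left (by linarith) hS.le
      nlinarith only [h2, h3]
    have hS3N : S ≤ 3 * N := by
      linarith only [hSNG, hcase]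
    have hAA : A ^ α₁ * A ^ (-α₁) = 1 := by
      rw [← Real.rpow_add hA0]; simp
    have hU1 : U ^ (-α₁) ≤ A ^ α₁ * S ^ (-α₁) := by
      have h1 : (A * U) ^ (-α₁) ≤ S ^ (-α₁) :=
        Real.rpow_le_rpow_of_nonpos hS hSU (by linarith)
      rw [Real.mul_rpow hA0.le hU.le] at h1
      calc U ^ (-α₁) = A ^ α₁ * (A ^ (-α₁) * U ^ (-α₁)) := by
            rw [← mul_assoc, hAA, one_mul]
        _ ≤ A ^ α₁ * S ^ (-α₁) := by
            apply mul_le_mul_of_nonneg_left h1 (by positivity)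
    have hU2 : U ^ (-α₂) ≤ B ^ (-α₂) * S ^ (-α₂) := by
      calc U ^ (-α₂) ≤ (B * S) ^ (-α₂) :=
            Real.rpow_le_rpow hU.le hUS (by linarith)
        _ = B ^ (-α₂) * S ^ (-α₂) := Real.mul_rpow hB0.le hS.le
    have hΓb : Γ ≤ c₁ * (A ^ α₁ * S ^ (-α₁)) + c₂ * (B ^ (-α₂) * S ^ (-α₂)) := by
      rw [hΓ_eq]
      gcongr
    have hS31 : S ^ (-α₁ + 1) ≤ 3 * N ^ (-α₁ + 1) := by
      calc S ^ (-α₁ + 1) ≤ (3 * N) ^ (-α₁ + 1) :=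
            Real.rpow_le_rpow hS.le hS3N (by linarith)
        _ = 3 ^ (-α₁ + 1) * N ^ (-α₁ + 1) := Real.mul_rpow (by norm_num) hN.le
        _ ≤ 3 * N ^ (-α₁ + 1) := by
            have : (3:ℝ) ^ (-α₁ + 1) ≤ 3 ^ (1:ℝ) :=
              Real.rpow_le_rpow_of_exponent_le (by norm_num) (by linarith)
            rw [Real.rpow_one] at this
            exact mul_le_mul_of_nonneg_right this (by positivity)
    have hS32 : S ^ (-α₂ + 1) ≤ 3 ^ (-α₂ + 1) * N ^ (-α₂ + 1) := by
      calc S ^ (-α₂ + 1) ≤ (3 * N) ^ (-α₂ + 1) :=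
            Real.rpow_le_rpow hS.le hS3N (by linarith)
        _ = 3 ^ (-α₂ + 1) * N ^ (-α₂ + 1) := Real.mul_rpow (by norm_num) hN.le
    have hT2 : k * Γ * (N ^ 2 - G ^ 2) ≤ D₁ * N ^ (2 - α₁) + D₂ * N ^ (2 - α₂) := by
      have step1 : k * Γ * (N ^ 2 - G ^ 2) ≤ k * Γ * (3 * N * S) :=
        mul_le_mul_of_nonneg_left hNG (by positivity)
      have step2 : k * Γ * (3 * N * S) ≤
          k * (c₁ * (A ^ α₁ * S ^ (-α₁)) + c₂ * (B ^ (-α₂) * S ^ (-α₂))) * (3 * N * S) := by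
        apply mul_le_mul_of_nonneg_right _ (by positivity)
        apply mul_le_mul_of_nonneg_left hΓb hk.le
      have step3 : k * (c₁ * (A ^ α₁ * S ^ (-α₁)) + c₂ * (B ^ (-α₂) * S ^ (-α₂))) * (3 * N * S)
          = 3 * k * N * (c₁ * A ^ α₁ * S ^ (-α₁ + 1) + c₂ * B ^ (-α₂) * S ^ (-α₂ + 1)) := by
        rw [← rpow_mul_self' hS, ← rpow_mul_self' hS]
        ring
      have step4 : 3 * k * N * (c₁ * A ^ α₁ * S ^ (-α₁ + 1) + c₂ * B ^ (-α₂) * S ^ (-α₂ + 1))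
          ≤ 3 * k * N * (c₁ * A ^ α₁ * (3 * N ^ (-α₁ + 1))
              + c₂ * B ^ (-α₂) * (3 ^ (-α₂ + 1) * N ^ (-α₂ + 1))) := by
        apply mul_le_mul_of_nonneg_left _ (by positivity)
        gcongr
      have step5 : 3 * k * N * (c₁ * A ^ α₁ * (3 * N ^ (-α₁ + 1))
              + c₂ * B ^ (-α₂) * (3 ^ (-α₂ + 1) * N ^ (-α₂ + 1)))
          = D₁ * N ^ (2 - α₁) + D₂ * N ^ (2 - α₂) := by
        have e1 : N ^ (-α₁ + 1) * N = N ^ (2 - α₁) := by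
          rw [rpow_mul_self' hN]; ring_nf
        have e2 : N ^ (-α₂ + 1) * N = N ^ (2 - α₂) := by
          rw [rpow_mul_self' hN]; ring_nf
        rw [hD₁, hD₂]
        linear_combination (9 * k * c₁ * A ^ α₁) * e1 + (3 * k * c₂ * B ^ (-α₂) * 3 ^ (-α₂ + 1)) * e2
      linarith
    have h3 : -K * Γz * P + k * Γ * (N ^ 2 - G ^ 2) ≤ -(lam * c₁) * N ^ (2 - α₁) := by
      have m1 := mul_le_mul_of_nonneg_right hK1 hX.le
      have m2 := mul_le_mul_of_nonneg_right hK2 hY.le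
      linarith only [hΓzP, hT2, m1, m2]
    have h4 : (N ^ 2 + G ^ 2) ^ ((2 - α₁)/2) ≤ 5 ^ ((2 - α₁)/2) * N ^ (2 - α₁) := by
      have h5 : (N ^ 2 + G ^ 2 : ℝ) ≤ 5 * N ^ 2 := by
        nlinarith only [mul_nonneg (by linarith only [hcase] : (0:ℝ) ≤ 2*N - G)
          (by linarith only [hG, hN.le] : (0:ℝ) ≤ 2*N + G)]
      calc (N ^ 2 + G ^ 2) ^ ((2 - α₁)/2) ≤ (5 * N ^ 2) ^ ((2 - α₁)/2) :=
            Real.rpow_le_rpow (by positivity) h5 (by linarith)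
        _ = 5 ^ ((2 - α₁)/2) * (N ^ 2) ^ ((2 - α₁)/2) := Real.mul_rpow (by norm_num) (by positivity)
        _ = 5 ^ ((2 - α₁)/2) * N ^ (2 - α₁) := by
            rw [sq_rpow' hN, show 2 * ((2 - α₁)/2) = 2 - α₁ by ring]
    have h6 : c * (N ^ 2 + G ^ 2) ^ ((2 - α₁)/2) ≤ lam * c₁ * N ^ (2 - α₁) := by
      calc c * (N ^ 2 + G ^ 2) ^ ((2 - α₁)/2)
          ≤ (lam * c₁ / (5:ℝ) ^ ((2 - α₁)/2)) * (5 ^ ((2 - α₁)/2) * N ^ (2 - α₁)) :=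
            mul_le_mul hcle1 h4 (by positivity) (by positivity)
        _ = lam * c₁ * N ^ (2 - α₁) := by
            rw [← mul_assoc, div_mul_cancel₀ _ (by positivity : ((5:ℝ) ^ ((2 - α₁)/2)) ≠ 0)]
    linarith only [h3, h6]
  · -- Case II : 2N < G
    have hGpos : 0 < G := by linarith
    have hsq : N ^ 2 ≤ (G/2) ^ 2 := by
      have hhalf : N ≤ G/2 := by linarith only [hcase]
      nlinarith only [mul_le_mul hhalf hhalf hN.le (hN.le.trans hhalf)]
    have hne : N ^ 2 - G ^ 2 ≤ -(3/4) * G ^ 2 := by linarith only [hsq]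
    have hUb : U ≤ 3/2 * B * G := by
      have h2 : U ≤ B * (N + G) :=
        le_trans hUS (mul_le_mul_of_nonneg_left hSNG hB0.le)
      have h3 : B * (N + G) ≤ B * (3/2 * G) :=
        mul_le_mul_of_nonneg_left (by linarith only [hcase]) hB0.le
      linarith only [h2, h3]
    have hm : c₁ * ((3/2 * B) ^ (-α₁) * G ^ (-α₁)) ≤ Γ := by
      have h1 : (3/2 * B * G) ^ (-α₁) ≤ U ^ (-α₁) :=
        Real.rpow_le_rpow_of_nonpos hU hUb (by linarith)
      rw [show (3/2 * B * G : ℝ) = (3/2 * B) * G by ring, Real.mul_rpow (by positivity) hGpos.le] at h1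
      rw [hΓ_eq]
      have h2 : (0:ℝ) ≤ c₂ * U ^ (-α₂) := by positivity
      have h3 := mul_le_mul_of_nonneg_left h1 hc₁.le
      linarith only [h2, h3]
    have hT2 : k * Γ * (N ^ 2 - G ^ 2) ≤ -E * G ^ (2 - α₁) := by
      set m : ℝ := c₁ * ((3/2 * B) ^ (-α₁) * G ^ (-α₁)) with hm_def
      have hm0 : 0 < m := by rw [hm_def]; positivity
      have s1 : Γ * (N ^ 2 - G ^ 2) ≤ m * (N ^ 2 - G ^ 2) := by
        apply mul_le_mul_of_nonpos_right hm
          (by linarith only [hsq, sq_nonneg G] : N ^ 2 - G ^ 2 ≤ 0)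
      have s2 : m * (N ^ 2 - G ^ 2) ≤ m * (-(3/4) * G ^ 2) :=
        mul_le_mul_of_nonneg_left hne hm0.le
      have s3 : k * (m * (-(3/4) * G ^ 2)) = -E * G ^ (2 - α₁) := by
        have e1 : G ^ (-α₁) * G ^ (2:ℕ) = G ^ (2 - α₁) := by
          rw [rpow_mul_sq' hGpos]; ring_nf
        rw [hm_def, hE]
        linear_combination (-(3/4) * k * c₁ * (3/2 * B) ^ (-α₁)) * e1
      calc k * Γ * (N ^ 2 - G ^ 2) ≤ k * (m * (N ^ 2 - G ^ 2)) := by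
            rw [mul_assoc]; exact mul_le_mul_of_nonneg_left s1 hk.le
        _ ≤ k * (m * (-(3/4) * G ^ 2)) := mul_le_mul_of_nonneg_left s2 hk.le
        _ = -E * G ^ (2 - α₁) := s3
    have hKz : 0 ≤ K * Γz * P :=
      mul_nonneg (mul_nonneg hK0.le hΓz0.le) hP0.le
    have h4 : (N ^ 2 + G ^ 2) ^ ((2 - α₁)/2) ≤ 2 ^ ((2 - α₁)/2) * G ^ (2 - α₁) := by
      have h5 : (N ^ 2 + G ^ 2 : ℝ) ≤ 2 * G ^ 2 := by
        linarith only [hsq, sq_nonneg G]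
      calc (N ^ 2 + G ^ 2) ^ ((2 - α₁)/2) ≤ (2 * G ^ 2) ^ ((2 - α₁)/2) :=
            Real.rpow_le_rpow (by positivity) h5 (by linarith)
        _ = 2 ^ ((2 - α₁)/2) * (G ^ 2) ^ ((2 - α₁)/2) := Real.mul_rpow (by norm_num) (by positivity)
        _ = 2 ^ ((2 - α₁)/2) * G ^ (2 - α₁) := by
            rw [sq_rpow' hGpos, show 2 * ((2 - α₁)/2) = 2 - α₁ by ring]
    have h6 : c * (N ^ 2 + G ^ 2) ^ ((2 - α₁)/2) ≤ E * G ^ (2 - α₁) := by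
      calc c * (N ^ 2 + G ^ 2) ^ ((2 - α₁)/2)
          ≤ (E / (2:ℝ) ^ ((2 - α₁)/2)) * (2 ^ ((2 - α₁)/2) * G ^ (2 - α₁)) :=
            mul_le_mul hcle2 h4 (by positivity) (by positivity)
        _ = E * G ^ (2 - α₁) := by
            rw [← mul_assoc, div_mul_cancel₀ _ (by positivity : ((2:ℝ) ^ ((2 - α₁)/2)) ≠ 0)]
    linarith only [hT2, hKz, h6]
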